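/- Let κ₀ > κ₁ > ⋯ > κ_{k-1} be a finite decreasing sequence of regular cardinals and let X ⊆ ∏_{i<k} κ_i. Define π : ∏_{i<k} κ_i → X by: π(σ) = τ iff for each i < k, τ(i) is the σ(i)-th element (in increasing order) of {τ'(i) : τ' ∈ X, τ'↾i = τ↾i} (assuming X is such that π is well-defined and onto X). If the complement of X is in the product of nonstationary ideals NS(κ̄), then for every B ⊆ ∏ κ_i: ∏κ_i \ B ∈ NS(κ̄) if and only if π⁻¹[X \ B] ∈ NS(κ̄). -/

import Mathlib

open Cardinal Set

/-- `C` is a closed unbounded subset of the ordinal `o`. -/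
def IsClubIn (C : Set Ordinal) (o : Ordinal) : Prop :=
  C ⊆ Set.Iio o ∧ (∀ b < o, ∃ c ∈ C, b < c) ∧
    (∀ b < o, b ≠ 0 → (∀ d < b, ∃ c ∈ C, d < c ∧ c < b) → b ∈ C)

/-- `S` is stationary in the (limit) ordinal `o`. -/
def IsStationaryIn (S : Set Ordinal) (o : Ordinal) : Prop :=
  Order.IsSuccLimit o ∧ ∀ C : Set Ordinal, IsClubIn C o → (S ∩ C).Nonempty

/-- `S` is small with respect to the cardinal `c`: nonstationary in `c` if `c` is
uncountable, bounded in `c` if `c` is countable. -/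
def SmallInNS (c : Cardinal) (S : Set Ordinal) : Prop :=
  (ℵ₀ < c → ¬ IsStationaryIn S c.ord) ∧ (c ≤ ℵ₀ → ∃ b < c.ord, ∀ x ∈ S, x < b)

/-- membership in the iterated product ideal `NS(κ̄)` of the nonstationary ideals
(bounded ideal on `ℵ₀`) on a finite decreasing sequence of regular cardinals. -/
def InProdNS : {k : ℕ} → (Fin k → Cardinal) → Set (Fin k → Ordinal) → Prop
  | 0, _, X => X = ∅
  | _ + 1, κs, X =>
      SmallInNS (κs 0)
        {a : Ordinal | a < (κs 0).ord ∧
          ¬ InProdNS (fun i => κs i.succ) {τ | Fin.cons a τ ∈ X}}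


namespace Stmt17

variable {κ : Cardinal} {A B C D S : Set Ordinal}

lemma ord_isLimit (h : κ.IsRegular) : Order.IsSuccLimit κ.ord := Cardinal.isSuccLimit_ord h.aleph0_le

lemma reg_cases (h : κ.IsRegular) : ℵ₀ < κ ∨ κ ≤ ℵ₀ :=
  (lt_or_eq_of_le h.aleph0_le).imp id (fun he => he.ge)

lemma small_iffU (h : ℵ₀ < κ) (hlim : Order.IsSuccLimit κ.ord) :
    SmallInNS κ A ↔ ∃ C, IsClubIn C κ.ord ∧ ∀ x ∈ A, x ∉ C := by
  constructor
  · intro hs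
    have h1 := hs.1 h
    rw [IsStationaryIn, not_and] at h1
    have h2 := h1 hlim
    push_neg at h2
    obtain ⟨C, hC, hempty⟩ := h2
    exact ⟨C, hC, fun x hx hxC => (Set.eq_empty_iff_forall_notMem.mp hempty x) ⟨hx, hxC⟩⟩
  · rintro ⟨C, hC, hd⟩
    refine ⟨fun _ hst => ?_, fun hle => absurd hle h.not_ge⟩
    obtain ⟨x, hxA, hxC⟩ := hst.2 C hC
    exact hd x hxA hxC

lemma small_iffB (h : κ ≤ ℵ₀) :
    SmallInNS κ A ↔ ∃ b < κ.ord, ∀ x ∈ A, x < b := by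
  constructor
  · exact fun hs => hs.2 h
  · exact fun hb => ⟨fun hgt => absurd h hgt.not_ge, fun _ => hb⟩

lemma small_mono (hAB : A ⊆ B) (hB : SmallInNS κ B) : SmallInNS κ A := by
  constructor
  · intro hℵ hst
    exact hB.1 hℵ ⟨hst.1, fun C hC =>
      (hst.2 C hC).mono (Set.inter_subset_inter_left C hAB)⟩
  · intro hle
    obtain ⟨b, hb, hbd⟩ := hB.2 hle
    exact ⟨b, hb, fun x hx => hbd x (hAB hx)⟩

lemma isClubIn_inter (hreg : κ.IsRegular) (hℵ : ℵ₀ < κ)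
    (hC : IsClubIn C κ.ord) (hD : IsClubIn D κ.ord) : IsClubIn (C ∩ D) κ.ord := by
  obtain ⟨hC1, hC2, hC3⟩ := hC
  obtain ⟨hD1, hD2, hD3⟩ := hD
  refine ⟨fun x hx => hC1 hx.1, ?_, ?_⟩
  · intro b hb
    have step : ∀ x < κ.ord, ∃ d, (d ∈ D ∧ x < d ∧ d < κ.ord) ∧ ∃ c ∈ C, x < c ∧ c < d := by
      intro x hx
      obtain ⟨c, hc, hxc⟩ := hC2 x hx
      obtain ⟨d, hd, hcd⟩ := hD2 c (hC1 hc)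
      exact ⟨d, ⟨hd, hxc.trans hcd, hD1 hd⟩, c, hc, hxc, hcd⟩
    choose! g hg1 hg2 using step
    let f : ℕ → Ordinal := fun n => Nat.rec (g b) (fun _ x => g x) n
    have hf0 : f 0 = g b := rfl
    have hfs : ∀ n, f (n + 1) = g (f n) := fun n => rfl
    have hfp : ∀ n, f n ∈ D ∧ b < f n ∧ f n < κ.ord := by
      intro n
      induction n with
      | zero =>
        obtain ⟨h1, h2, h3⟩ := hg1 b hb
        exact ⟨h1, h2, h3⟩
      | succ n ih =>
        obtain ⟨h1, h2, h3⟩ := hg1 (f n) ih.2.2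
        exact ⟨h1, ih.2.1.trans h2, h3⟩
    have hmono : ∀ n, f n < f (n + 1) := fun n => (hg1 (f n) (hfp n).2.2).2.1
    have hbdd : BddAbove (Set.range f) := Ordinal.bddAbove_range f
    set s := ⨆ n, f n with hs
    have hsl : s < κ.ord := by
      rw [hs]
      apply Cardinal.iSup_lt_ord_lift_of_isRegular hreg _ (fun n => (hfp n).2.2)
      rw [Cardinal.mk_nat, Cardinal.lift_aleph0]
      exact hℵ
    have hfle : ∀ n, f n ≤ s := fun n => le_ciSup hbdd n
    have hflt : ∀ n, f n < s := fun n => lt_of_lt_of_le (hmono n) (hfle (n + 1))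
    have hbs : b < s := lt_of_lt_of_le (hfp 0).2.1 (hfle 0)
    have hdense : ∀ d < s, ∃ n, d < f n := by
      intro d hd
      by_contra hcon
      push_neg at hcon
      exact absurd (ciSup_le hcon) hd.not_ge
    have hsne : s ≠ 0 := fun h0 => by simp [h0] at hbs
    have hsD : s ∈ D := by
      apply hD3 s hsl hsne
      intro d hd
      obtain ⟨n, hn⟩ := hdense d hd
      exact ⟨f (n + 1), (hfp (n + 1)).1, hn.trans (hmono n), hflt (n + 1)⟩
    have hsC : s ∈ C := by
      apply hC3 s hsl hsne
      intro d hd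
      obtain ⟨n, hn⟩ := hdense d hd
      obtain ⟨c, hc, h1, h2⟩ := hg2 (f n) (hfp n).2.2
      exact ⟨c, hc, hn.trans h1, lt_of_lt_of_le (h2.trans (hmono (n+1)) : c < f (n+2)) (hfle (n+2))⟩
    exact ⟨s, ⟨hsC, hsD⟩, hbs⟩
  · intro b hb hb0 hd
    constructor
    · exact hC3 b hb hb0 (fun d hdb => (hd d hdb).imp (fun c hc => ⟨hc.1.1, hc.2⟩))
    · exact hD3 b hb hb0 (fun d hdb => (hd d hdb).imp (fun c hc => ⟨hc.1.2, hc.2⟩))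

lemma small_union (hreg : κ.IsRegular) (hA : SmallInNS κ A) (hB : SmallInNS κ B) :
    SmallInNS κ (A ∪ B) := by
  rcases reg_cases hreg with h | h
  · rw [small_iffU h (ord_isLimit hreg)] at hA hB ⊢
    obtain ⟨C, hC, hCd⟩ := hA
    obtain ⟨D, hD, hDd⟩ := hB
    refine ⟨C ∩ D, isClubIn_inter hreg h hC hD, ?_⟩
    rintro x (hx | hx) ⟨h1, h2⟩
    exacts [hCd x hx h1, hDd x hx h2]
  · rw [small_iffB h] at hA hB ⊢
    obtain ⟨b, hb, hbd⟩ := hA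
    obtain ⟨c, hc, hcd⟩ := hB
    refine ⟨max b c, max_lt hb hc, ?_⟩
    rintro x (hx | hx)
    exacts [(hbd x hx).trans_le (le_max_left b c), (hcd x hx).trans_le (le_max_right b c)]

lemma small_congr_diff (hreg : κ.IsRegular) (h1 : SmallInNS κ (A \ B)) (h2 : SmallInNS κ (B \ A)) :
    SmallInNS κ A ↔ SmallInNS κ B := by
  constructor
  · intro hA
    exact small_mono (fun x hx => by by_cases h : x ∈ A; exacts [Or.inl h, Or.inr ⟨hx, h⟩])
      (small_union hreg hA h2)
  · intro hB
    exact small_mono (fun x hx => by by_cases h : x ∈ B; exacts [Or.inl h, Or.inr ⟨hx, h⟩])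
      (small_union hreg hB h1)

lemma not_small_Iio (hreg : κ.IsRegular) : ¬ SmallInNS κ (Set.Iio κ.ord) := by
  intro hs
  rcases reg_cases hreg with h | h
  · rw [small_iffU h (ord_isLimit hreg)] at hs
    obtain ⟨C, hC, hCd⟩ := hs
    obtain ⟨c, hc, _⟩ := hC.2.1 0 (ord_isLimit hreg).pos
    exact hCd c (hC.1 hc) hc
  · rw [small_iffB h] at hs
    obtain ⟨b, hb, hbd⟩ := hs
    exact absurd (hbd b hb) (lt_irrefl b)

end Stmt17

namespace Stmt17

variable {κ : Cardinal} {A B C D S : Set Ordinal}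

section Enum

variable (hreg : κ.IsRegular) (hS : S ⊆ Set.Iio κ.ord)
  (hub : ∀ b < κ.ord, ∃ s ∈ S, b < s)

include hreg hS hub

lemma enum_spec : ∀ o < κ.ord,
    Ordinal.enumOrd S o ∈ S ∧ ∀ c < o, Ordinal.enumOrd S c < Ordinal.enumOrd S o := by
  intro o
  induction o using Ordinal.induction with
  | h o IH =>
    intro ho
    have hm : o.bsup (fun c _ => Ordinal.enumOrd S c) < κ.ord := by
      apply Ordinal.bsup_lt_ord
      · rw [hreg.cof_eq]
        exact Cardinal.lt_ord.mp ho
      · intro i hi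
        exact hS (IH i hi (hi.trans ho)).1
    obtain ⟨s, hsS, hms⟩ := hub _ hm
    have hne : (S ∩ { b | ∀ c, c < o → Ordinal.enumOrd S c < b }).Nonempty := by
      refine ⟨s, hsS, fun c hc => lt_of_le_of_lt ?_ hms⟩
      exact Ordinal.le_bsup (fun c _ => Ordinal.enumOrd S c) c hc
    have hmem := csInf_mem hne
    rw [← Ordinal.enumOrd.eq_1] at hmem
    exact ⟨hmem.1, fun c hc => hmem.2 c hc⟩

lemma enum_mem {o : Ordinal} (ho : o < κ.ord) : Ordinal.enumOrd S o ∈ S :=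
  (enum_spec hreg hS hub o ho).1

lemma enum_lt_ord {o : Ordinal} (ho : o < κ.ord) : Ordinal.enumOrd S o < κ.ord :=
  hS (enum_mem hreg hS hub ho)

lemma enum_strictMono {c o : Ordinal} (hc : c < o) (ho : o < κ.ord) :
    Ordinal.enumOrd S c < Ordinal.enumOrd S o :=
  (enum_spec hreg hS hub o ho).2 c hc

lemma enum_le_self : ∀ o < κ.ord, o ≤ Ordinal.enumOrd S o := by
  intro o
  induction o using Ordinal.induction with
  | h o IH =>
    intro ho
    by_contra hcon
    push_neg at hcon
    have h1 : Ordinal.enumOrd S o ≤ Ordinal.enumOrd S (Ordinal.enumOrd S o) :=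
      IH _ hcon (lt_trans hcon ho)
    have h2 : Ordinal.enumOrd S (Ordinal.enumOrd S o) < Ordinal.enumOrd S o :=
      enum_strictMono hreg hS hub hcon ho
    exact absurd (h1.trans_lt h2) (lt_irrefl _)

lemma enum_inj {a b : Ordinal} (ha : a < κ.ord) (hb : b < κ.ord)
    (h : Ordinal.enumOrd S a = Ordinal.enumOrd S b) : a = b := by
  rcases lt_trichotomy a b with hab | hab | hab
  · exact absurd h (enum_strictMono hreg hS hub hab hb).ne
  · exact hab
  · exact absurd h.symm (enum_strictMono hreg hS hub hab ha).ne

lemma enum_surj : ∀ s ∈ S, ∃ o < κ.ord, Ordinal.enumOrd S o = s := by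
  intro s hs
  have hsord : s < κ.ord := hS hs
  by_contra hcon
  push_neg at hcon
  have hTne : ∃ o, o ∈ {o | o < κ.ord ∧ s < Ordinal.enumOrd S o} := by
    have hs1 : s + 1 < κ.ord := (ord_isLimit hreg).succ_lt hsord
    exact ⟨s + 1, hs1, lt_of_lt_of_le (Order.lt_succ s)
      (by simpa using enum_le_self hreg hS hub (s+1) hs1)⟩
  set o₀ := sInf {o | o < κ.ord ∧ s < Ordinal.enumOrd S o} with ho₀def
  have ho₀ : o₀ ∈ {o | o < κ.ord ∧ s < Ordinal.enumOrd S o} := csInf_mem hTne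
  have hle : Ordinal.enumOrd S o₀ ≤ s := by
    apply Ordinal.enumOrd_le_of_forall_lt hs
    intro b hb
    have hbord : b < κ.ord := hb.trans ho₀.1
    have hbnot : b ∉ {o | o < κ.ord ∧ s < Ordinal.enumOrd S o} :=
      notMem_of_lt_csInf hb (OrderBot.bddBelow _)
    have : ¬ s < Ordinal.enumOrd S b := fun hlt => hbnot ⟨hbord, hlt⟩
    exact lt_of_le_of_ne (not_lt.mp this) (hcon b hbord)
  exact absurd hle (not_le.mpr ho₀.2)

lemma preimage_isClub (hC : IsClubIn C κ.ord) (hCS : C ⊆ S) :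
    IsClubIn {a | a < κ.ord ∧ Ordinal.enumOrd S a ∈ C} κ.ord := by
  refine ⟨fun x hx => hx.1, ?_, ?_⟩
  · intro b hb
    obtain ⟨c, hc, hec⟩ := hC.2.1 _ (enum_lt_ord hreg hS hub hb)
    obtain ⟨α, hα, hαe⟩ := enum_surj hreg hS hub c (hCS hc)
    refine ⟨α, ⟨hα, hαe ▸ hc⟩, ?_⟩
    by_contra hcon
    push_neg at hcon
    rcases lt_or_eq_of_le hcon with h | h
    · exact absurd (hαe ▸ enum_strictMono hreg hS hub h hb) (not_lt.mpr hec.le)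
    · rw [h] at hαe; rw [hαe] at hec; exact absurd hec (lt_irrefl c)
  · intro b hb hb0 hdens
    have hb0' : (0 : Ordinal) < b := pos_iff_ne_zero.mpr hb0
    have heb0 : Ordinal.enumOrd S b ≠ 0 := by
      obtain ⟨α, ⟨_, _⟩, h0α, hαb⟩ := hdens 0 hb0'
      exact fun h => (h ▸ enum_strictMono hreg hS hub hαb hb).not_ge zero_le
    have hdC : ∀ d < Ordinal.enumOrd S b, ∃ x ∈ C, d < x ∧ x < Ordinal.enumOrd S b := by
      intro d hd
      by_contra hcon
      push_neg at hcon
      -- every e α with α ∈ P is ≤ d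
      set P := {α | (α < κ.ord ∧ Ordinal.enumOrd S α ∈ C) ∧ α < b} with hP
      have hPe : ∀ α ∈ P, Ordinal.enumOrd S α ≤ d := by
        intro α hα
        by_contra hlt
        push_neg at hlt
        exact absurd (enum_strictMono hreg hS hub hα.2 hb)
          (not_lt.mpr ((hcon _ hα.1.2 hlt)))
      have hPne : P.Nonempty := by
        obtain ⟨α, hα, _, hαb⟩ := hdens 0 hb0'
        exact ⟨α, hα, hαb⟩
      have hPcof : ∀ α ∈ P, ∃ α' ∈ P, α < α' := by
        intro α hα
        obtain ⟨α', hα', hαα', hα'b⟩ := hdens α hα.2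
        exact ⟨α', ⟨hα', hα'b⟩, hαα'⟩
      set sb := sSup (Ordinal.enumOrd S '' P) with hsbar
      have hbddP : BddAbove (Ordinal.enumOrd S '' P) := by
        refine ⟨d, ?_⟩
        rintro x ⟨α, hα, rfl⟩
        exact hPe α hα
      have hPine : (Ordinal.enumOrd S '' P).Nonempty := hPne.image _
      have hsd : sb ≤ d := csSup_le hPine (by rintro x ⟨α, hα, rfl⟩; exact hPe α hα)
      have hslt : sb < κ.ord := (hsd.trans_lt hd).trans (enum_lt_ord hreg hS hub hb)
      have hsgt : ∀ α ∈ P, Ordinal.enumOrd S α < sb := by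
        intro α hα
        obtain ⟨α', hα', hlt⟩ := hPcof α hα
        exact lt_of_lt_of_le (enum_strictMono hreg hS hub hlt (hα'.2.trans hb))
          (le_csSup hbddP ⟨α', hα', rfl⟩)
      have hs0 : sb ≠ 0 := by
        obtain ⟨α, hα⟩ := hPne
        exact fun h => ((h ▸ hsgt α hα)).not_ge zero_le
      have hsC : sb ∈ C := by
        apply hC.2.2 sb hslt hs0
        intro x hx
        obtain ⟨y, ⟨α, hα, rfl⟩, hxy⟩ := exists_lt_of_lt_csSup hPine hx
        exact ⟨_, hα.1.2, hxy, hsgt α hα⟩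
      have hfin : Ordinal.enumOrd S b ≤ sb := by
        apply Ordinal.enumOrd_le_of_forall_lt (hCS hsC)
        intro c hc
        obtain ⟨α, hα, hcα, hαb⟩ := hdens c hc
        exact (enum_strictMono hreg hS hub hcα (hαb.trans hb)).trans (hsgt α ⟨hα, hαb⟩)
      exact absurd hd (not_lt.mpr (hfin.trans hsd))
    exact ⟨hb, hC.2.2 _ (enum_lt_ord hreg hS hub hb) heb0 hdC⟩

end Enum

end Stmt17

namespace Stmt17

variable {κ : Cardinal} {A B C D S C₀ : Set Ordinal}

section Enum2

variable (hreg : κ.IsRegular) (hS : S ⊆ Set.Iio κ.ord)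
  (hub : ∀ b < κ.ord, ∃ s ∈ S, b < s)

include hreg hS hub

lemma image_isClub (hD : IsClubIn D κ.ord) (hC₀ : IsClubIn C₀ κ.ord) (hC₀S : C₀ ⊆ S)
    (hDC : ∀ α ∈ D, Ordinal.enumOrd S α ∈ C₀) :
    IsClubIn (Ordinal.enumOrd S '' D) κ.ord := by
  refine ⟨?_, ?_, ?_⟩
  · rintro x ⟨α, hα, rfl⟩
    exact enum_lt_ord hreg hS hub (hD.1 hα)
  · intro b hb
    obtain ⟨α, hα, hbα⟩ := hD.2.1 b hb
    exact ⟨_, ⟨α, hα, rfl⟩, hbα.trans_le (enum_le_self hreg hS hub α (hD.1 hα))⟩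
  · intro b hb hb0 hdens
    have hb0' : (0 : Ordinal) < b := pos_iff_ne_zero.mpr hb0
    have hbC₀ : b ∈ C₀ := by
      apply hC₀.2.2 b hb hb0
      intro d hd
      obtain ⟨x, ⟨α, hα, rfl⟩, hdx, hxb⟩ := hdens d hd
      exact ⟨_, hDC α hα, hdx, hxb⟩
    set A' := {α | α ∈ D ∧ Ordinal.enumOrd S α < b} with hA'
    have hA'sub : ∀ α ∈ A', α < b :=
      fun α hα => lt_of_le_of_lt (enum_le_self hreg hS hub α (hD.1 hα.1)) hα.2
    have hA'ne : A'.Nonempty := by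
      obtain ⟨x, ⟨α, hα, rfl⟩, _, hxb⟩ := hdens 0 hb0'
      exact ⟨α, hα, hxb⟩
    have hA'cof : ∀ α ∈ A', ∃ α' ∈ A', α < α' := by
      intro α hα
      obtain ⟨x, ⟨α', hα', rfl⟩, hlt, hxb⟩ := hdens _ hα.2
      refine ⟨α', ⟨hα', hxb⟩, ?_⟩
      by_contra hcon
      push_neg at hcon
      rcases lt_or_eq_of_le hcon with h | h
      · exact absurd (enum_strictMono hreg hS hub h (hD.1 hα.1)) (not_lt.mpr hlt.le)
      · rw [h] at hlt; exact absurd hlt (lt_irrefl _)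
    have hbddA : BddAbove A' := ⟨b, fun α hα => (hA'sub α hα).le⟩
    set β := sSup A' with hβ
    have hβb : β ≤ b := csSup_le hA'ne (fun α hα => (hA'sub α hα).le)
    have hβord : β < κ.ord := hβb.trans_lt hb
    have hltβ : ∀ α ∈ A', α < β := by
      intro α hα
      obtain ⟨α', hα', hlt⟩ := hA'cof α hα
      exact hlt.trans_le (le_csSup hbddA hα')
    have hβ0 : β ≠ 0 := by
      obtain ⟨α, hα⟩ := hA'ne
      exact fun h => ((h ▸ hltβ α hα)).not_ge zero_le
    have hβD : β ∈ D := by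
      apply hD.2.2 β hβord hβ0
      intro x hx
      obtain ⟨α, hα, hxα⟩ := exists_lt_of_lt_csSup hA'ne hx
      exact ⟨α, hα.1, hxα, hltβ α hα⟩
    have hcb : ∀ c < β, Ordinal.enumOrd S c < b := by
      intro c hc
      obtain ⟨α, hα, hcα⟩ := exists_lt_of_lt_csSup hA'ne hc
      exact (enum_strictMono hreg hS hub hcα ((hA'sub α hα).trans hb)).trans hα.2
    have hle : Ordinal.enumOrd S β ≤ b := Ordinal.enumOrd_le_of_forall_lt (hC₀S hbC₀) hcb
    have hge : ¬ Ordinal.enumOrd S β < b := by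
      intro hlt
      obtain ⟨α', hα', hββ'⟩ := hA'cof β ⟨hβD, hlt⟩
      exact absurd (le_csSup hbddA hα') (not_le.mpr hββ')
    exact ⟨β, hβD, (hle.lt_or_eq.resolve_left hge)⟩

end Enum2

lemma unbounded_of_small_compl (hreg : κ.IsRegular) (hS : S ⊆ Set.Iio κ.ord)
    (hsm : SmallInNS κ {y | y < κ.ord ∧ y ∉ S}) : ∀ b < κ.ord, ∃ s ∈ S, b < s := by
  rcases reg_cases hreg with h | h
  · rw [small_iffU h (ord_isLimit hreg)] at hsm
    obtain ⟨C', hC', hd⟩ := hsm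
    intro b hb
    obtain ⟨c, hc, hbc⟩ := hC'.2.1 b hb
    have hcS : c ∈ S := by
      by_contra hcon
      exact hd c ⟨hC'.1 hc, hcon⟩ hc
    exact ⟨c, hcS, hbc⟩
  · rw [small_iffB h] at hsm
    obtain ⟨b₀, hb₀, hbd⟩ := hsm
    intro c hc
    have hx : max b₀ c + 1 < κ.ord := (ord_isLimit hreg).succ_lt (max_lt hb₀ hc)
    have hxS : max b₀ c + 1 ∈ S := by
      by_contra hcon
      have := hbd _ ⟨hx, hcon⟩
      exact absurd ((le_max_left b₀ c).trans (Order.le_succ _)) (not_le.mpr this)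
    exact ⟨_, hxS, (le_max_right b₀ c).trans_lt (Order.lt_succ _)⟩

/-- a club contained in `S`, in the uncountable case -/
lemma exists_club_subset (h : ℵ₀ < κ) (hlim : Order.IsSuccLimit κ.ord)
    (hsm : SmallInNS κ {y | y < κ.ord ∧ y ∉ S}) :
    ∃ C₀, IsClubIn C₀ κ.ord ∧ C₀ ⊆ S := by
  rw [small_iffU h hlim] at hsm
  obtain ⟨C₀, hC₀, hd⟩ := hsm
  refine ⟨C₀, hC₀, fun x hx => ?_⟩
  by_contra hcon
  exact hd x ⟨hC₀.1 hx, hcon⟩ hx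

lemma transfer (hreg : κ.IsRegular) (hS : S ⊆ Set.Iio κ.ord)
    (hsm : SmallInNS κ {y | y < κ.ord ∧ y ∉ S}) (Y : Set Ordinal) :
    SmallInNS κ {y | y ∈ Y ∧ y ∈ S} ↔
      SmallInNS κ {a | a < κ.ord ∧ Ordinal.enumOrd S a ∈ Y} := by
  have hub := unbounded_of_small_compl hreg hS hsm
  rcases reg_cases hreg with h | h
  · obtain ⟨C₀, hC₀, hC₀S⟩ := exists_club_subset h (ord_isLimit hreg) hsm
    rw [small_iffU h (ord_isLimit hreg), small_iffU h (ord_isLimit hreg)]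
    constructor
    · rintro ⟨C, hC, hd⟩
      have hC' : IsClubIn (C ∩ C₀) κ.ord := isClubIn_inter hreg h hC hC₀
      have hC'S : C ∩ C₀ ⊆ S := fun x hx => hC₀S hx.2
      refine ⟨{a | a < κ.ord ∧ Ordinal.enumOrd S a ∈ C ∩ C₀},
        preimage_isClub hreg hS hub hC' hC'S, ?_⟩
      rintro x ⟨hx, hxY⟩ ⟨_, hxC, hxC₀⟩
      exact hd _ ⟨hxY, hC₀S hxC₀⟩ hxC
    · rintro ⟨D₂, hD₂, hd⟩
      have hD₃ : IsClubIn (D₂ ∩ {a | a < κ.ord ∧ Ordinal.enumOrd S a ∈ C₀}) κ.ord :=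
        isClubIn_inter hreg h hD₂ (preimage_isClub hreg hS hub hC₀ hC₀S)
      refine ⟨Ordinal.enumOrd S '' (D₂ ∩ {a | a < κ.ord ∧ Ordinal.enumOrd S a ∈ C₀}),
        image_isClub hreg hS hub hD₃ hC₀ hC₀S (fun α hα => hα.2.2), ?_⟩
      rintro x ⟨hxY, hxS⟩ ⟨α, ⟨hαD₂, hαord, _⟩, rfl⟩
      exact hd α ⟨hαord, hxY⟩ hαD₂
  · rw [small_iffB h, small_iffB h]
    constructor
    · rintro ⟨b, hb, hbd⟩
      refine ⟨b, hb, ?_⟩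
      rintro a ⟨haord, haY⟩
      exact lt_of_le_of_lt (enum_le_self hreg hS hub a haord)
        (hbd _ ⟨haY, enum_mem hreg hS hub haord⟩)
    · rintro ⟨b, hb, hbd⟩
      refine ⟨Ordinal.enumOrd S b, enum_lt_ord hreg hS hub hb, ?_⟩
      rintro x ⟨hxY, hxS⟩
      obtain ⟨α, hαord, rfl⟩ := enum_surj hreg hS hub x hxS
      exact enum_strictMono hreg hS hub (hbd α ⟨hαord, hxY⟩) hb

end Stmt17

namespace Stmt17

lemma not_inProdNS_full : ∀ (k : ℕ) (κs : Fin k → Cardinal), (∀ i, (κs i).IsRegular) →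
    ¬ InProdNS κs {τ | ∀ i, τ i < (κs i).ord} := by
  intro k
  induction k with
  | zero =>
    intro κs _ h
    have h' : (Fin.elim0 : Fin 0 → Ordinal) ∈ ({τ | ∀ i, τ i < (κs i).ord} : Set _) :=
      fun i => i.elim0
    have he : ({τ : Fin 0 → Ordinal | ∀ i, τ i < (κs i).ord} : Set _) = ∅ := h
    rw [he] at h'
    exact h'
  | succ k IH =>
    intro κs hreg h
    have h' : SmallInNS (κs 0) {a : Ordinal | a < (κs 0).ord ∧
        ¬ InProdNS (fun i => κs i.succ)
          {τ | Fin.cons a τ ∈ {τ : Fin (k+1) → Ordinal | ∀ i, τ i < (κs i).ord}}} := h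
    have hset : {a : Ordinal | a < (κs 0).ord ∧
        ¬ InProdNS (fun i => κs i.succ)
          {τ | Fin.cons a τ ∈ {τ : Fin (k+1) → Ordinal | ∀ i, τ i < (κs i).ord}}}
        = Set.Iio (κs 0).ord := by
      ext a
      simp only [Set.mem_setOf_eq, Set.mem_Iio]
      constructor
      · exact fun h => h.1
      · intro ha
        refine ⟨ha, ?_⟩
        have hseteq : {τ : Fin k → Ordinal | ∀ i, (Fin.cons a τ : Fin (k+1) → Ordinal) i < (κs i).ord}
            = {τ : Fin k → Ordinal | ∀ i, τ i < ((fun i : Fin k => κs i.succ) i).ord} := by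
          ext τ
          simp only [Set.mem_setOf_eq, Fin.forall_fin_succ, Fin.cons_zero, Fin.cons_succ]
          exact ⟨fun h => h.2, fun h => ⟨ha, h⟩⟩
        rw [hseteq]
        exact IH _ (fun i => hreg i.succ)
    rw [hset] at h'
    exact not_small_Iio (hreg 0) h'

end Stmt17

open Stmt17 in
/-- The transfer property of the canonical enumeration map `π` onto a set `X` whose
complement is in `NS(κ̄)`: a set `B` has `NS(κ̄)`-large intersection with the product
iff `π⁻¹[X \ B]` is `NS(κ̄)`-small, i.e. `∏κ̄ \ B ∈ NS(κ̄) ↔ π⁻¹[X \ B] ∈ NS(κ̄)`. -/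
theorem stmt17 (k : ℕ) (κs : Fin k → Cardinal)
    (hreg : ∀ i, (κs i).IsRegular)
    (hdec : ∀ i j : Fin k, i < j → κs j < κs i)
    (X : Set (Fin k → Ordinal))
    (hX : ∀ τ ∈ X, ∀ i, τ i < (κs i).ord)
    (hcompl : InProdNS κs {τ | (∀ i, τ i < (κs i).ord) ∧ τ ∉ X})
    (π : (Fin k → Ordinal) → (Fin k → Ordinal))
    (hπX : ∀ σ : Fin k → Ordinal, (∀ i, σ i < (κs i).ord) → π σ ∈ X)
    (hπ : ∀ σ : Fin k → Ordinal, (∀ i, σ i < (κs i).ord) → ∀ i : Fin k,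
      π σ i = Ordinal.enumOrd
        {b : Ordinal | ∃ τ' ∈ X, (∀ j < i, τ' j = π σ j) ∧ τ' i = b} (σ i))
    (honto : ∀ τ ∈ X, ∃ σ : Fin k → Ordinal, (∀ i, σ i < (κs i).ord) ∧ π σ = τ) :
    ∀ B : Set (Fin k → Ordinal),
      (InProdNS κs {τ | (∀ i, τ i < (κs i).ord) ∧ τ ∉ B} ↔
        InProdNS κs {σ | (∀ i, σ i < (κs i).ord) ∧ π σ ∈ X ∧ π σ ∉ B}) := by
  induction k with
  | zero =>
    intro B
    have hXuniv : ∀ τ : Fin 0 → Ordinal, τ ∈ X := by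
      intro τ
      by_contra h
      have h0 : τ ∈ {τ : Fin 0 → Ordinal | (∀ i, τ i < (κs i).ord) ∧ τ ∉ X} :=
        ⟨fun i => i.elim0, h⟩
      have he : {τ : Fin 0 → Ordinal | (∀ i, τ i < (κs i).ord) ∧ τ ∉ X} = ∅ := hcompl
      rw [he] at h0
      exact h0
    have hone : ∀ σ : Fin 0 → Ordinal, π σ = σ := fun σ => funext fun i => i.elim0
    show ({τ : Fin 0 → Ordinal | (∀ i, τ i < (κs i).ord) ∧ τ ∉ B} = ∅) ↔
      ({σ : Fin 0 → Ordinal | (∀ i, σ i < (κs i).ord) ∧ π σ ∈ X ∧ π σ ∉ B} = ∅)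
    have hseteq : {σ : Fin 0 → Ordinal | (∀ i, σ i < (κs i).ord) ∧ π σ ∈ X ∧ π σ ∉ B}
        = {τ : Fin 0 → Ordinal | (∀ i, τ i < (κs i).ord) ∧ τ ∉ B} := by
      ext σ
      simp only [Set.mem_setOf_eq, hone σ]
      exact ⟨fun h => ⟨h.1, h.2.2⟩, fun h => ⟨h.1, hXuniv σ, h.2⟩⟩
    rw [hseteq]
  | succ k IH =>
    intro B
    have hreg0 := hreg 0
    have hreg' : ∀ i : Fin k, ((fun i : Fin k => κs i.succ) i).IsRegular := fun i => hreg i.succ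
    have hdec' : ∀ i j : Fin k, i < j →
        (fun i : Fin k => κs i.succ) j < (fun i : Fin k => κs i.succ) i :=
      fun i j hij => hdec i.succ j.succ (by rwa [Fin.succ_lt_succ_iff])
    set S₀ : Set Ordinal := {b : Ordinal | ∃ τ' ∈ X, τ' 0 = b} with hS₀def
    have hS0 : S₀ ⊆ Set.Iio (κs 0).ord := by
      rintro b ⟨τ', hτ', rfl⟩
      exact hX τ' hτ' 0
    have hconsAll : ∀ (a : Ordinal), a < (κs 0).ord → ∀ t : Fin k → Ordinal,
        ((∀ i : Fin (k+1), (Fin.cons a t : Fin (k+1) → Ordinal) i < (κs i).ord) ↔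
          (∀ i : Fin k, t i < (κs i.succ).ord)) := by
      intro a ha t
      rw [Fin.forall_fin_succ]
      simp only [Fin.cons_zero, Fin.cons_succ]
      exact ⟨fun h => h.2, fun h => ⟨ha, h⟩⟩
    -- section set equalities
    have hsectX : ∀ a : Ordinal, a < (κs 0).ord →
        {τ : Fin k → Ordinal | Fin.cons a τ ∈
          {τ : Fin (k+1) → Ordinal | (∀ i, τ i < (κs i).ord) ∧ τ ∉ X}}
        = {t : Fin k → Ordinal | (∀ i, t i < (κs i.succ).ord) ∧ Fin.cons a t ∉ X} := by
      intro a ha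
      ext t
      simp only [Set.mem_setOf_eq]
      exact and_congr_left fun _ => hconsAll a ha t
    have hsectB : ∀ a : Ordinal, a < (κs 0).ord →
        {τ : Fin k → Ordinal | Fin.cons a τ ∈
          {τ : Fin (k+1) → Ordinal | (∀ i, τ i < (κs i).ord) ∧ τ ∉ B}}
        = {t : Fin k → Ordinal | (∀ i, t i < (κs i.succ).ord) ∧ Fin.cons a t ∉ B} := by
      intro a ha
      ext t
      simp only [Set.mem_setOf_eq]
      exact and_congr_left fun _ => hconsAll a ha t
    have hsectR : ∀ a : Ordinal, a < (κs 0).ord →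
        {τ : Fin k → Ordinal | Fin.cons a τ ∈
          {σ : Fin (k+1) → Ordinal | (∀ i, σ i < (κs i).ord) ∧ π σ ∈ X ∧ π σ ∉ B}}
        = {t : Fin k → Ordinal | (∀ i, t i < (κs i.succ).ord) ∧
            π (Fin.cons a t) ∈ X ∧ π (Fin.cons a t) ∉ B} := by
      intro a ha
      ext t
      simp only [Set.mem_setOf_eq]
      exact and_congr_left fun _ => hconsAll a ha t
    -- the good set G
    set G : Set Ordinal := {a : Ordinal | a < (κs 0).ord ∧
      InProdNS (fun i : Fin k => κs i.succ)
        {t : Fin k → Ordinal | (∀ i, t i < (κs i.succ).ord) ∧ Fin.cons a t ∉ X}} with hGdef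
    have hGmem : ∀ a : Ordinal, a ∈ G ↔ (a < (κs 0).ord ∧
        InProdNS (fun i : Fin k => κs i.succ)
          {t : Fin k → Ordinal | (∀ i, t i < (κs i.succ).ord) ∧ Fin.cons a t ∉ X}) :=
      fun a => Iff.rfl
    have hGsmall : SmallInNS (κs 0) {a : Ordinal | a < (κs 0).ord ∧ a ∉ G} := by
      have h0 : SmallInNS (κs 0) {a : Ordinal | a < (κs 0).ord ∧
          ¬ InProdNS (fun i : Fin k => κs i.succ)
            {τ | Fin.cons a τ ∈
              {τ : Fin (k+1) → Ordinal | (∀ i, τ i < (κs i).ord) ∧ τ ∉ X}}} := hcompl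
      have hs : {a : Ordinal | a < (κs 0).ord ∧ a ∉ G} = {a : Ordinal | a < (κs 0).ord ∧
          ¬ InProdNS (fun i : Fin k => κs i.succ)
            {τ | Fin.cons a τ ∈
              {τ : Fin (k+1) → Ordinal | (∀ i, τ i < (κs i).ord) ∧ τ ∉ X}}} :=
        Set.ext fun a => and_congr_right fun ha => not_congr (by
          rw [hsectX a ha]
          exact ⟨fun h => ((hGmem a).mp h).2, fun h => (hGmem a).mpr ⟨ha, h⟩⟩)
      rw [hs]
      exact h0
    have hGS₀ : G ⊆ S₀ := by
      intro a haG
      obtain ⟨ha, hInP⟩ := (hGmem a).mp haG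
      by_contra hnot
      have hseteq : {t : Fin k → Ordinal | (∀ i, t i < (κs i.succ).ord) ∧ Fin.cons a t ∉ X}
          = {t : Fin k → Ordinal | ∀ i, t i < ((fun i : Fin k => κs i.succ) i).ord} := by
        ext t
        simp only [Set.mem_setOf_eq]
        exact ⟨fun h => h.1, fun h => ⟨h, fun hX' => hnot ⟨Fin.cons a t, hX', by simp⟩⟩⟩
      rw [hseteq] at hInP
      exact not_inProdNS_full k _ hreg' hInP
    have hSsmall : SmallInNS (κs 0) {y : Ordinal | y < (κs 0).ord ∧ y ∉ S₀} := by
      apply small_mono _ hGsmall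
      rintro y ⟨hy1, hy2⟩
      exact ⟨hy1, fun hG => hy2 (hGS₀ hG)⟩
    have hub := unbounded_of_small_compl hreg0 hS0 hSsmall
    have key0 : ∀ σ : Fin (k+1) → Ordinal, (∀ i, σ i < (κs i).ord) →
        π σ 0 = Ordinal.enumOrd S₀ (σ 0) := by
      intro σ hσ
      rw [hπ σ hσ 0]
      congr 1
      ext b
      simp only [Set.mem_setOf_eq]
      constructor
      · rintro ⟨τ', hτ', _, h0⟩
        exact ⟨τ', hτ', h0⟩
      · rintro ⟨τ', hτ', h0⟩
        exact ⟨τ', hτ', fun j hj => absurd hj (Fin.not_lt_zero j), h0⟩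
    have consLt : ∀ (a : Ordinal), a < (κs 0).ord → ∀ t : Fin k → Ordinal,
        (∀ i, t i < (κs i.succ).ord) →
        ∀ i : Fin (k+1), (Fin.cons a t : Fin (k+1) → Ordinal) i < (κs i).ord :=
      fun a ha t ht => (hconsAll a ha t).mpr ht
    -- pointwise equivalence on good coordinates
    have pointwise : ∀ a : Ordinal, a < (κs 0).ord → Ordinal.enumOrd S₀ a ∈ G →
        (InProdNS (fun i : Fin k => κs i.succ)
            {t : Fin k → Ordinal | (∀ i, t i < (κs i.succ).ord) ∧
              Fin.cons (Ordinal.enumOrd S₀ a) t ∉ B} ↔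
          InProdNS (fun i : Fin k => κs i.succ)
            {t : Fin k → Ordinal | (∀ i, t i < (κs i.succ).ord) ∧
              π (Fin.cons a t) ∈ X ∧ π (Fin.cons a t) ∉ B}) := by
      intro a ha hGa
      have headEq : ∀ t : Fin k → Ordinal, (∀ i, t i < (κs i.succ).ord) →
          π (Fin.cons a t) 0 = Ordinal.enumOrd S₀ a := by
        intro t ht
        rw [key0 _ (consLt a ha t ht), Fin.cons_zero]
      have consEq : ∀ t : Fin k → Ordinal, (∀ i, t i < (κs i.succ).ord) →
          π (Fin.cons a t)
            = Fin.cons (Ordinal.enumOrd S₀ a) (Fin.tail (π (Fin.cons a t))) := by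
        intro t ht
        rw [← headEq t ht]
        exact (Fin.cons_self_tail _).symm
      have hX' : ∀ τ ∈ {t : Fin k → Ordinal | Fin.cons (Ordinal.enumOrd S₀ a) t ∈ X},
          ∀ i : Fin k, τ i < ((fun i : Fin k => κs i.succ) i).ord := by
        intro τ hτ i
        have h := hX _ hτ i.succ
        rwa [Fin.cons_succ] at h
      have hcompl' : InProdNS (fun i : Fin k => κs i.succ)
          {τ : Fin k → Ordinal | (∀ i, τ i < ((fun i : Fin k => κs i.succ) i).ord) ∧
            τ ∉ {t : Fin k → Ordinal | Fin.cons (Ordinal.enumOrd S₀ a) t ∈ X}} :=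
        ((hGmem _).mp hGa).2
      have hπX' : ∀ t : Fin k → Ordinal, (∀ i, t i < ((fun i : Fin k => κs i.succ) i).ord) →
          Fin.tail (π (Fin.cons a t)) ∈
            {t : Fin k → Ordinal | Fin.cons (Ordinal.enumOrd S₀ a) t ∈ X} := by
        intro t ht
        show Fin.cons (Ordinal.enumOrd S₀ a) (Fin.tail (π (Fin.cons a t))) ∈ X
        rw [← consEq t ht]
        exact hπX _ (consLt a ha t ht)
      have hπ' : ∀ t : Fin k → Ordinal, (∀ i, t i < ((fun i : Fin k => κs i.succ) i).ord) →
          ∀ i : Fin k, Fin.tail (π (Fin.cons a t)) i = Ordinal.enumOrd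
            {b : Ordinal | ∃ t' ∈ {t : Fin k → Ordinal | Fin.cons (Ordinal.enumOrd S₀ a) t ∈ X},
              (∀ j < i, t' j = Fin.tail (π (Fin.cons a t)) j) ∧ t' i = b} (t i) := by
        intro t ht i
        have h := hπ (Fin.cons a t) (consLt a ha t ht) i.succ
        rw [Fin.cons_succ] at h
        show π (Fin.cons a t) i.succ = _
        rw [h]
        congr 1
        ext b
        simp only [Set.mem_setOf_eq]
        constructor
        · rintro ⟨τ', hτ'X, hagree, hlast⟩
          have h0 : τ' 0 = Ordinal.enumOrd S₀ a := by
            rw [hagree 0 (Fin.succ_pos i), headEq t ht]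
          have hτeq : Fin.cons (Ordinal.enumOrd S₀ a) (Fin.tail τ') = τ' := by
            rw [← h0]
            exact Fin.cons_self_tail τ'
          refine ⟨Fin.tail τ', ?_, ?_, hlast⟩
          · show Fin.cons (Ordinal.enumOrd S₀ a) (Fin.tail τ') ∈ X
            rw [hτeq]
            exact hτ'X
          · intro j hj
            show τ' j.succ = Fin.tail (π (Fin.cons a t)) j
            exact hagree j.succ (by rwa [Fin.succ_lt_succ_iff])
        · rintro ⟨t', ht'X, hagree, hlast⟩
          refine ⟨Fin.cons (Ordinal.enumOrd S₀ a) t', ht'X, ?_,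
            by rw [Fin.cons_succ]; exact hlast⟩
          intro j hj
          rcases Fin.eq_zero_or_eq_succ j with rfl | ⟨j', rfl⟩
          · rw [Fin.cons_zero, headEq t ht]
          · rw [Fin.cons_succ]
            exact hagree j' (by rwa [Fin.succ_lt_succ_iff] at hj)
      have honto' : ∀ τ ∈ {t : Fin k → Ordinal | Fin.cons (Ordinal.enumOrd S₀ a) t ∈ X},
          ∃ t : Fin k → Ordinal, (∀ i, t i < ((fun i : Fin k => κs i.succ) i).ord) ∧
            Fin.tail (π (Fin.cons a t)) = τ := by
        intro τ hτ
        obtain ⟨σ, hσ, hπσ⟩ := honto (Fin.cons (Ordinal.enumOrd S₀ a) τ) hτ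
        have hσ0 : Ordinal.enumOrd S₀ (σ 0) = Ordinal.enumOrd S₀ a := by
          have h := key0 σ hσ
          rw [hπσ, Fin.cons_zero] at h
          exact h.symm
        have hσ0a : σ 0 = a := enum_inj hreg0 hS0 hub (hσ 0) ha hσ0
        refine ⟨Fin.tail σ, fun i => hσ i.succ, ?_⟩
        show Fin.tail (π (Fin.cons a (Fin.tail σ))) = τ
        rw [← hσ0a, Fin.cons_self_tail, hπσ, Fin.tail_cons]
      have hIH := IH (fun i : Fin k => κs i.succ) hreg' hdec'
        {t : Fin k → Ordinal | Fin.cons (Ordinal.enumOrd S₀ a) t ∈ X}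
        hX' hcompl'
        (fun t => Fin.tail (π (Fin.cons a t)))
        hπX' hπ' honto'
        {t : Fin k → Ordinal | Fin.cons (Ordinal.enumOrd S₀ a) t ∈ B}
      have hsetR' : {t : Fin k → Ordinal | (∀ i, t i < ((fun i : Fin k => κs i.succ) i).ord) ∧
          (fun t => Fin.tail (π (Fin.cons a t))) t ∈
            {t : Fin k → Ordinal | Fin.cons (Ordinal.enumOrd S₀ a) t ∈ X} ∧
          (fun t => Fin.tail (π (Fin.cons a t))) t ∉
            {t : Fin k → Ordinal | Fin.cons (Ordinal.enumOrd S₀ a) t ∈ B}}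
          = {t : Fin k → Ordinal | (∀ i, t i < (κs i.succ).ord) ∧
              π (Fin.cons a t) ∈ X ∧ π (Fin.cons a t) ∉ B} := by
        ext t
        simp only [Set.mem_setOf_eq]
        refine and_congr_right fun ht => ?_
        have hc := consEq t ht
        constructor
        · rintro ⟨h1, h2⟩
          exact ⟨by rw [hc]; exact h1, by rw [hc]; exact h2⟩
        · rintro ⟨h1, h2⟩
          rw [hc] at h1 h2
          exact ⟨h1, h2⟩
      rw [hsetR'] at hIH
      have hsetL' : {τ : Fin k → Ordinal | (∀ i, τ i < ((fun i : Fin k => κs i.succ) i).ord) ∧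
          τ ∉ {t : Fin k → Ordinal | Fin.cons (Ordinal.enumOrd S₀ a) t ∈ B}}
          = {t : Fin k → Ordinal | (∀ i, t i < (κs i.succ).ord) ∧
              Fin.cons (Ordinal.enumOrd S₀ a) t ∉ B} := rfl
      rw [hsetL'] at hIH
      exact hIH
    -- identify the outer-level sets
    have goalL : InProdNS κs {τ : Fin (k+1) → Ordinal | (∀ i, τ i < (κs i).ord) ∧ τ ∉ B} ↔
        SmallInNS (κs 0) {y : Ordinal | y < (κs 0).ord ∧
          ¬ InProdNS (fun i : Fin k => κs i.succ)
            {t : Fin k → Ordinal | (∀ i, t i < (κs i.succ).ord) ∧ Fin.cons y t ∉ B}} := by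
      show SmallInNS (κs 0) _ ↔ _
      rw [show {a : Ordinal | a < (κs 0).ord ∧ ¬ InProdNS (fun i : Fin k => κs i.succ)
          {τ | Fin.cons a τ ∈ {τ : Fin (k+1) → Ordinal | (∀ i, τ i < (κs i).ord) ∧ τ ∉ B}}}
          = {y : Ordinal | y < (κs 0).ord ∧ ¬ InProdNS (fun i : Fin k => κs i.succ)
            {t : Fin k → Ordinal | (∀ i, t i < (κs i.succ).ord) ∧ Fin.cons y t ∉ B}} from
        Set.ext fun a => and_congr_right fun ha => not_congr (by rw [hsectB a ha])]
    have goalR : InProdNS κs {σ : Fin (k+1) → Ordinal |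
          (∀ i, σ i < (κs i).ord) ∧ π σ ∈ X ∧ π σ ∉ B} ↔
        SmallInNS (κs 0) {a : Ordinal | a < (κs 0).ord ∧
          ¬ InProdNS (fun i : Fin k => κs i.succ)
            {t : Fin k → Ordinal | (∀ i, t i < (κs i.succ).ord) ∧
              π (Fin.cons a t) ∈ X ∧ π (Fin.cons a t) ∉ B}} := by
      show SmallInNS (κs 0) _ ↔ _
      rw [show {a : Ordinal | a < (κs 0).ord ∧ ¬ InProdNS (fun i : Fin k => κs i.succ)
          {τ | Fin.cons a τ ∈ {σ : Fin (k+1) → Ordinal |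
            (∀ i, σ i < (κs i).ord) ∧ π σ ∈ X ∧ π σ ∉ B}}}
          = {a : Ordinal | a < (κs 0).ord ∧ ¬ InProdNS (fun i : Fin k => κs i.succ)
            {t : Fin k → Ordinal | (∀ i, t i < (κs i.succ).ord) ∧
              π (Fin.cons a t) ∈ X ∧ π (Fin.cons a t) ∉ B}} from
        Set.ext fun a => and_congr_right fun ha => not_congr (by rw [hsectR a ha])]
    set AL : Set Ordinal := {y : Ordinal | y < (κs 0).ord ∧
      ¬ InProdNS (fun i : Fin k => κs i.succ)
        {t : Fin k → Ordinal | (∀ i, t i < (κs i.succ).ord) ∧ Fin.cons y t ∉ B}} with hALdef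
    set AR : Set Ordinal := {a : Ordinal | a < (κs 0).ord ∧
      ¬ InProdNS (fun i : Fin k => κs i.succ)
        {t : Fin k → Ordinal | (∀ i, t i < (κs i.succ).ord) ∧
          π (Fin.cons a t) ∈ X ∧ π (Fin.cons a t) ∉ B}} with hARdef
    have hALmem : ∀ y : Ordinal, y ∈ AL ↔ (y < (κs 0).ord ∧
        ¬ InProdNS (fun i : Fin k => κs i.succ)
          {t : Fin k → Ordinal | (∀ i, t i < (κs i.succ).ord) ∧ Fin.cons y t ∉ B}) :=
      fun y => Iff.rfl
    have hARmem : ∀ a : Ordinal, a ∈ AR ↔ (a < (κs 0).ord ∧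
        ¬ InProdNS (fun i : Fin k => κs i.succ)
          {t : Fin k → Ordinal | (∀ i, t i < (κs i.succ).ord) ∧
            π (Fin.cons a t) ∈ X ∧ π (Fin.cons a t) ∉ B}) :=
      fun a => Iff.rfl
    -- step 1: restrict AL to G
    have step1 : SmallInNS (κs 0) AL ↔
        SmallInNS (κs 0) {y : Ordinal | y ∈ {y : Ordinal | y ∈ G ∧ y ∈ AL} ∧ y ∈ S₀} := by
      apply small_congr_diff hreg0
      · apply small_mono _ hGsmall
        rintro y ⟨hyAL, hyn⟩
        refine ⟨((hALmem y).mp hyAL).1, fun hyG => hyn ⟨⟨hyG, hyAL⟩, hGS₀ hyG⟩⟩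
      · apply small_mono _ hGsmall
        rintro y ⟨⟨⟨hyG, hyAL⟩, _⟩, hyn⟩
        exact absurd hyAL hyn
    have step2 := transfer hreg0 hS0 hSsmall {y : Ordinal | y ∈ G ∧ y ∈ AL}
    have hEB : SmallInNS (κs 0)
        {a : Ordinal | a < (κs 0).ord ∧ Ordinal.enumOrd S₀ a ∈ {y : Ordinal | y ∉ G}} := by
      rw [← transfer hreg0 hS0 hSsmall {y : Ordinal | y ∉ G}]
      apply small_mono _ hGsmall
      rintro y ⟨hyn, hyS₀⟩
      exact ⟨hS0 hyS₀, hyn⟩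
    have step3 : SmallInNS (κs 0)
        {a : Ordinal | a < (κs 0).ord ∧
          Ordinal.enumOrd S₀ a ∈ {y : Ordinal | y ∈ G ∧ y ∈ AL}} ↔
        SmallInNS (κs 0) AR := by
      apply small_congr_diff hreg0
      · apply small_mono _ hEB
        rintro a ⟨⟨ha, hGa, hALa⟩, han⟩
        exfalso
        apply han
        rw [hARmem a]
        exact ⟨ha, fun hR => ((hALmem _).mp hALa).2 ((pointwise a ha hGa).mpr hR)⟩
      · apply small_mono _ hEB
        rintro a ⟨haAR, han⟩
        obtain ⟨ha, hRa⟩ := (hARmem a).mp haAR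
        refine ⟨ha, fun hGa => han ⟨ha, hGa, ?_⟩⟩
        rw [hALmem _]
        exact ⟨((hGmem _).mp hGa).1, fun hL => hRa ((pointwise a ha hGa).mp hL)⟩
    exact (goalL.trans (step1.trans (step2.trans step3))).trans goalR.symm
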